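/- arXiv:1501.04545 — 3 statements merged into one kernel-verified Lean document; each statement's English description precedes it below -/
import Mathlib

section
/- The map P(z₁, z̃) = (z₁ - 2i⟨γ, z̃⟩ + 2i‖γ‖², γ) on the Siegel upper half-space satisfies P ∘ P = P, and its range is the image of the complex geodesic φ_γ(ζ) = (ζ + i‖γ‖², γ). -/
open Complex
open scoped InnerProductSpace

lemma inner_self_c {m : ℕ} (γ : EuclideanSpace ℂ (Fin m)) :
    ⟪γ, γ⟫_ℂ = ((‖γ‖ ^ 2 : ℝ) : ℂ) := by
  rw [inner_self_eq_norm_sq_to_K]; norm_cast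

/-- The projection `P(z₁, z̃) = (z₁ - 2i⟨γ, z̃⟩ + 2i‖γ‖², γ)` on the Siegel upper
half-space satisfies `P ∘ P = P`, and its range equals the image of the complex
geodesic `φ_γ(ζ) = (ζ + i‖γ‖², γ)`. -/
theorem projection_idempotent_range (m : ℕ) (γ : EuclideanSpace ℂ (Fin m)) :
    (∀ z : ℂ × EuclideanSpace ℂ (Fin m), ‖z.2‖ ^ 2 < z.1.im →
      (fun z : ℂ × EuclideanSpace ℂ (Fin m) =>
          ((z.1 - 2 * I * ⟪γ, z.2⟫_ℂ + 2 * I * (‖γ‖ ^ 2 : ℝ)), γ))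
        (((z.1 - 2 * I * ⟪γ, z.2⟫_ℂ + 2 * I * (‖γ‖ ^ 2 : ℝ)), γ)) =
        (((z.1 - 2 * I * ⟪γ, z.2⟫_ℂ + 2 * I * (‖γ‖ ^ 2 : ℝ)), γ))) ∧
    (fun z : ℂ × EuclideanSpace ℂ (Fin m) =>
        ((z.1 - 2 * I * ⟪γ, z.2⟫_ℂ + 2 * I * (‖γ‖ ^ 2 : ℝ)), γ)) ''
        {z : ℂ × EuclideanSpace ℂ (Fin m) | ‖z.2‖ ^ 2 < z.1.im} =
      (fun ζ : ℂ => ((ζ + I * (‖γ‖ ^ 2 : ℝ), γ) : ℂ × EuclideanSpace ℂ (Fin m))) ''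
        {ζ : ℂ | 0 < ζ.im} := by
  constructor
  · intro z _
    simp only [Prod.mk.injEq, and_true, inner_self_c]
    ring
  · ext ⟨w1, w2⟩
    simp only [Set.mem_image, Set.mem_setOf_eq, Prod.mk.injEq]
    constructor
    · rintro ⟨z, hz, h1, h2⟩
      refine ⟨z.1 - 2 * I * ⟪γ, z.2⟫_ℂ + I * (‖γ‖ ^ 2 : ℝ), ?_, ?_, h2⟩
      · simp only [Set.mem_setOf_eq, add_im, sub_im, mul_im, mul_re, I_re, I_im,
          ofReal_re, ofReal_im, Complex.re_ofNat, Complex.im_ofNat]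
        have hre : 2 * re (⟪γ, z.2⟫_ℂ) ≤ 2 * (‖γ‖ * ‖z.2‖) := by
          have := re_inner_le_norm (𝕜 := ℂ) γ z.2
          rw [RCLike.re_to_complex] at this
          linarith
        nlinarith [sq_nonneg (‖γ‖ - ‖z.2‖), hz]
      · rw [← h1]; ring
    · rintro ⟨ζ, hζ, h1, h2⟩
      refine ⟨(ζ + I * (‖γ‖ ^ 2 : ℝ), γ), ?_, ?_, h2⟩
      · simp only [Set.mem_setOf_eq, add_im, mul_im, I_re, I_im, ofReal_re, ofReal_im]
        simpa using hζ
      · rw [← h1]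
        simp only [inner_self_c]
        ring
end

section
/- With the Bergman metric on the Siegel upper half-space ℍₙ as in the explicit matrix formula, for any p, v ∈ ℂ^{n-1} and z = (z₁, z̃) ∈ ℍₙ one has ‖(2i⟨p,v⟩, v)‖²_{ℍₙ,z} = 4(‖v‖²·|u_{ℍₙ}(z)| + |⟨p - z̃, v⟩|²)/u_{ℍₙ}(z)², where ⟨a,b⟩ = āᵀb and u_{ℍₙ}(z) = -Im z₁ + ‖z̃‖². -/
open Complex
open scoped InnerProductSpace

/-- The squared Bergman/Kobayashi norm `wᵀ (g_{j,k}) w̄` of a tangent vector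
`w = (w₁, w̃)` at `z = (z₁, z̃)` in the Siegel upper half-space, with
`u = -Im z₁ + ‖z̃‖²`, `g_{1,1} = 1/u²`, `g_{1,k} = 2i z_k/u²`, `g_{j,1} = -2i z̄_j/u²`,
`g_{j,j} = 4(Im z₁ - Σ_{l≥2,l≠j}|z_l|²)/u²`, `g_{j,k} = 4 z_k z̄_j/u²` (`j≠k`, `j,k≥2`). -/
noncomputable def bergNormSq (m : ℕ) (z w : ℂ × EuclideanSpace ℂ (Fin m)) : ℂ :=
  let u : ℂ := ((-z.1.im + ‖z.2‖ ^ 2 : ℝ) : ℂ)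
  (1 / u ^ 2) * (w.1 * (starRingEnd ℂ) w.1)
    + ∑ k, (2 * I * z.2 k / u ^ 2) * (w.1 * (starRingEnd ℂ) (w.2 k))
    + ∑ j, (-(2 * I * (starRingEnd ℂ) (z.2 j)) / u ^ 2) * (w.2 j * (starRingEnd ℂ) w.1)
    + ∑ j, ((4 * ((z.1.im : ℝ) - ∑ l ∈ Finset.univ.erase j, ‖z.2 l‖ ^ 2) : ℝ) / u ^ 2)
        * (w.2 j * (starRingEnd ℂ) (w.2 j))
    + ∑ j, ∑ k ∈ Finset.univ.erase j,
        (4 * z.2 k * (starRingEnd ℂ) (z.2 j) / u ^ 2) * (w.2 j * (starRingEnd ℂ) (w.2 k))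

/-- `‖(2i⟨p,v⟩, v)‖²_{ℍₙ,z} = 4(‖v‖²|u| + |⟨p - z̃, v⟩|²)/u²` for the Bergman metric
on the Siegel upper half-space, where `u = -Im z₁ + ‖z̃‖²`. -/
theorem bergNormSq_orthogonal_part (m : ℕ) (z : ℂ × EuclideanSpace ℂ (Fin m))
    (hz : ‖z.2‖ ^ 2 < z.1.im) (p v : EuclideanSpace ℂ (Fin m)) :
    bergNormSq m z (2 * I * ⟪p, v⟫_ℂ, v) =
      ((4 * (‖v‖ ^ 2 * |(-z.1.im + ‖z.2‖ ^ 2 : ℝ)| + ‖⟪p - z.2, v⟫_ℂ‖ ^ 2)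
        / (-z.1.im + ‖z.2‖ ^ 2) ^ 2 : ℝ) : ℂ) := by
  
  classical
  have huR : (-z.1.im + ‖z.2‖ ^ 2 : ℝ) < 0 := by linarith
  have habs : ∀ x : ℂ, ((‖x‖ ^ 2 : ℝ) : ℂ) = x * (starRingEnd ℂ) x := by
    intro x; rw [Complex.sq_norm]; exact_mod_cast (Complex.mul_conj x).symm
  set c : ℂ := ⟪p, v⟫_ℂ with hc
  set S : ℂ := ⟪z.2, v⟫_ℂ with hSdef
  have hS : S = ∑ j, (starRingEnd ℂ) (z.2 j) * v j := by
    simp [hSdef, PiLp.inner_apply, RCLike.inner_apply]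
    exact Finset.sum_congr rfl fun j _ => mul_comm _ _
  have hS' : (starRingEnd ℂ) S = ∑ j, z.2 j * (starRingEnd ℂ) (v j) := by
    rw [hS, map_sum]; exact Finset.sum_congr rfl fun j _ => by rw [map_mul]; simp
  have hN : ((‖v‖ ^ 2 : ℝ) : ℂ) = ∑ j, v j * (starRingEnd ℂ) (v j) := by
    have h1 : ‖v‖^2 = ∑ j, ‖v j‖^2 := by
      rw [EuclideanSpace.norm_eq, Real.sq_sqrt (by positivity)]
    rw [h1, Complex.ofReal_sum]; exact Finset.sum_congr rfl fun j _ => habs _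
  have hZnorm : ‖z.2‖^2 = ∑ j, ‖z.2 j‖^2 := by
    rw [EuclideanSpace.norm_eq, Real.sq_sqrt (by positivity)]
  have hZ : ((‖z.2‖ ^ 2 : ℝ) : ℂ) = ∑ j, z.2 j * (starRingEnd ℂ) (z.2 j) := by
    rw [hZnorm, Complex.ofReal_sum]; exact Finset.sum_congr rfl fun j _ => habs _
  set uC : ℂ := ((-z.1.im + ‖z.2‖ ^ 2 : ℝ) : ℂ) with huC
  have hu0 : uC ≠ 0 := by
    simp only [huC, ne_eq, Complex.ofReal_eq_zero]
    exact huR.ne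
  have huIm : (z.1.im : ℂ) = -uC + ∑ j, z.2 j * (starRingEnd ℂ) (z.2 j) := by
    rw [← hZ, huC]; push_cast; ring
  rw [bergNormSq]
  dsimp only
  rw [← huC]
  -- Term 2
  rw [show (∑ k, (2 * I * z.2 k / uC ^ 2) * (2 * I * c * (starRingEnd ℂ) (v k)))
      = (-(4*c)/uC^2) * (starRingEnd ℂ) S by
    rw [hS', Finset.mul_sum]
    refine Finset.sum_congr rfl fun k _ => ?_
    linear_combination (4 * z.2 k * c * (starRingEnd ℂ) (v k) / uC^2) * Complex.I_mul_I]
  -- Term 3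
  rw [show (∑ j, (-(2 * I * (starRingEnd ℂ) (z.2 j)) / uC ^ 2) * (v j * (starRingEnd ℂ) (2 * I * c)))
      = (-(4*(starRingEnd ℂ) c)/uC^2) * S by
    rw [hS, Finset.mul_sum]
    refine Finset.sum_congr rfl fun j _ => ?_
    simp only [map_mul, Complex.conj_I, map_ofNat]
    linear_combination (4 * (starRingEnd ℂ) (z.2 j) * v j * (starRingEnd ℂ) c / uC^2) * Complex.I_mul_I]
  -- Term 4
  rw [show (∑ j, (((4 * ((z.1.im : ℝ) - ∑ l ∈ Finset.univ.erase j, ‖z.2 l‖ ^ 2) : ℝ) : ℂ) / uC ^ 2)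
        * (v j * (starRingEnd ℂ) (v j)))
      = (-(4*uC)/uC^2) * (∑ j, v j * (starRingEnd ℂ) (v j))
        + (4/uC^2) * (∑ j, (z.2 j * (starRingEnd ℂ) (z.2 j)) * (v j * (starRingEnd ℂ) (v j))) by
    rw [Finset.mul_sum, Finset.mul_sum, ← Finset.sum_add_distrib]
    refine Finset.sum_congr rfl fun j _ => ?_
    have herase : ((∑ l ∈ Finset.univ.erase j, ‖z.2 l‖ ^ 2 : ℝ) : ℂ)
        = (∑ l, z.2 l * (starRingEnd ℂ) (z.2 l)) - z.2 j * (starRingEnd ℂ) (z.2 j) := by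
      have h2 : (∑ l ∈ Finset.univ.erase j, ‖z.2 l‖ ^ 2 : ℝ)
          = (∑ l, ‖z.2 l‖ ^ 2) - ‖z.2 j‖ ^ 2 :=
        Finset.sum_erase_eq_sub (Finset.mem_univ j)
      rw [h2, Complex.ofReal_sub, ← hZnorm, hZ, habs]
    rw [Complex.ofReal_mul, Complex.ofReal_sub, herase, huIm]
    push_cast
    ring]
  -- Term 5
  rw [show (∑ j, ∑ k ∈ Finset.univ.erase j,
        (4 * z.2 k * (starRingEnd ℂ) (z.2 j) / uC ^ 2) * (v j * (starRingEnd ℂ) (v k)))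
      = (4/uC^2) * (S * (starRingEnd ℂ) S)
        - (4/uC^2) * (∑ j, (z.2 j * (starRingEnd ℂ) (z.2 j)) * (v j * (starRingEnd ℂ) (v j))) by
    have h5 : ∀ j, (∑ k ∈ Finset.univ.erase j,
          (4 * z.2 k * (starRingEnd ℂ) (z.2 j) / uC ^ 2) * (v j * (starRingEnd ℂ) (v k)))
        = (∑ k, (4 * z.2 k * (starRingEnd ℂ) (z.2 j) / uC ^ 2) * (v j * (starRingEnd ℂ) (v k)))
          - (4 * z.2 j * (starRingEnd ℂ) (z.2 j) / uC ^ 2) * (v j * (starRingEnd ℂ) (v j)) :=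
      fun j => Finset.sum_erase_eq_sub (Finset.mem_univ j)
    have h6 : (4/uC^2) * (S * (starRingEnd ℂ) S)
        = ∑ j, ∑ k, (4 * z.2 k * (starRingEnd ℂ) (z.2 j) / uC ^ 2) * (v j * (starRingEnd ℂ) (v k)) := by
      rw [hS', hS, Finset.sum_mul_sum, Finset.mul_sum]
      refine Finset.sum_congr rfl fun j _ => ?_
      rw [Finset.mul_sum]
      exact Finset.sum_congr rfl fun k _ => by ring
    have h7 : (4/uC^2) * (∑ j, (z.2 j * (starRingEnd ℂ) (z.2 j)) * (v j * (starRingEnd ℂ) (v j)))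
        = ∑ j, (4 * z.2 j * (starRingEnd ℂ) (z.2 j) / uC ^ 2) * (v j * (starRingEnd ℂ) (v j)) := by
      rw [Finset.mul_sum]
      exact Finset.sum_congr rfl fun j _ => by ring
    simp only [h5]
    rw [Finset.sum_sub_distrib, ← h6, h7]]
  -- RHS
  have hw : ⟪p - z.2, v⟫_ℂ = c - S := by rw [hc, hSdef, inner_sub_left]
  rw [hw]
  have hrhs : ((4 * (‖v‖ ^ 2 * |(-z.1.im + ‖z.2‖ ^ 2 : ℝ)| + ‖c - S‖ ^ 2)
        / (-z.1.im + ‖z.2‖ ^ 2) ^ 2 : ℝ) : ℂ)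
      = 4 * ((∑ j, v j * (starRingEnd ℂ) (v j)) * (-uC) + (c - S) * ((starRingEnd ℂ) c - (starRingEnd ℂ) S)) / uC^2 := by
    rw [abs_of_neg huR]
    push_cast
    rw [show ((‖v‖ : ℂ))^2 = ∑ j, v j * (starRingEnd ℂ) (v j) by
      rw [← hN]; push_cast; ring]
    rw [show (((‖c - S‖ : ℝ) : ℂ))^2 = (c - S) * (starRingEnd ℂ) (c - S) by
      rw [← habs]; push_cast; ring]
    rw [show (-(z.1.im : ℂ) + ((‖z.2‖ : ℝ) : ℂ)^2) = uC by rw [huC]; push_cast; ring]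
    rw [map_sub]
  rw [hrhs]
  have hcw : (2 * I * c) * (starRingEnd ℂ) (2 * I * c) = 4 * (c * (starRingEnd ℂ) c) := by
    simp only [map_mul, Complex.conj_I, map_ofNat]
    linear_combination (-4 * c * (starRingEnd ℂ) c) * Complex.I_mul_I
  rw [hcw]
  clear_value uC
  apply mul_right_cancel₀ (pow_ne_zero 2 hu0)
  field_simp
  have h8 : uC ^ 8 * uC⁻¹ ^ 8 = 1 := by
    rw [← mul_pow, mul_inv_cancel₀ hu0, one_pow]
  have h9 : uC ^ 9 * uC⁻¹ ^ 8 = uC := by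
    rw [pow_succ, mul_comm (uC ^ 8) uC, mul_assoc, h8, mul_one]
  ring
end

section
/- For the holomorphic map H : ℍ₂ → ℂ², H(z₁,z₂) = (-1/z₁, z₂/(2z₁²)), and any γ ∈ ℂ, the slice h_γ(ζ) = H₁(φ_γ(ζ)) - 2iγ̄·H₂(φ_γ(ζ)) with φ_γ(ζ) = (ζ + i|γ|², γ) equals h_γ(ζ) = (-ζ - 2i|γ|²)/(ζ + i|γ|²)², and for ζ = x + iy ∈ ℍ we have Im(h_γ(ζ)) = (y(x²+y²) + 4y²|γ|² + 5y|γ|⁴ + 2|γ|⁶)/|ζ + i|γ|²|⁴ > 0. -/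
open Complex

/-- For `H(z₁,z₂) = (-1/z₁, z₂/(2z₁²))` on the Siegel upper half-space `ℍ₂` and `γ ∈ ℂ`,
the slice `h_γ(ζ) = H₁(φ_γ(ζ)) - 2iγ̄H₂(φ_γ(ζ))` along `φ_γ(ζ) = (ζ + i|γ|², γ)`
equals `(-ζ - 2i|γ|²)/(ζ + i|γ|²)²`, and its imaginary part is
`(y(x²+y²) + 4y²|γ|² + 5y|γ|⁴ + 2|γ|⁶)/|ζ + i|γ|²|⁴ > 0` for `ζ = x + iy ∈ ℍ`. -/
theorem slice_example (γ ζ : ℂ) (hζ : 0 < ζ.im) :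
    (-1 / (ζ + I * ((‖γ‖ ^ 2 : ℝ) : ℂ))
      - 2 * I * (starRingEnd ℂ) γ * (γ / (2 * (ζ + I * ((‖γ‖ ^ 2 : ℝ) : ℂ)) ^ 2)))
      = (-ζ - 2 * I * ((‖γ‖ ^ 2 : ℝ) : ℂ))
          / (ζ + I * ((‖γ‖ ^ 2 : ℝ) : ℂ)) ^ 2 ∧
    ((-ζ - 2 * I * ((‖γ‖ ^ 2 : ℝ) : ℂ))
        / (ζ + I * ((‖γ‖ ^ 2 : ℝ) : ℂ)) ^ 2).im
      = (ζ.im * (ζ.re ^ 2 + ζ.im ^ 2) + 4 * ζ.im ^ 2 * ‖γ‖ ^ 2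
          + 5 * ζ.im * ‖γ‖ ^ 4 + 2 * ‖γ‖ ^ 6)
        / ‖ζ + I * ((‖γ‖ ^ 2 : ℝ) : ℂ)‖ ^ 4 ∧
    0 < ((-ζ - 2 * I * ((‖γ‖ ^ 2 : ℝ) : ℂ))
        / (ζ + I * ((‖γ‖ ^ 2 : ℝ) : ℂ)) ^ 2).im := by
  set a : ℝ := ‖γ‖ ^ 2 with ha
  have ha0 : 0 ≤ a := sq_nonneg _
  set w : ℂ := ζ + I * (a : ℂ) with hwdef
  have hwim : w.im = ζ.im + a := by simp [hwdef]
  have hw : w ≠ 0 := by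
    intro h
    rw [h] at hwim
    simp at hwim
    linarith
  have hγ : (starRingEnd ℂ) γ * γ = (a : ℂ) := by
    rw [mul_comm, Complex.mul_conj]
    simp [ha, Complex.sq_norm]
  have h1 : (-1 / w - 2 * I * (starRingEnd ℂ) γ * (γ / (2 * w ^ 2)))
      = (-ζ - 2 * I * (a : ℂ)) / w ^ 2 := by
    have : -ζ - 2 * I * (a:ℂ) = -w - I * (a:ℂ) := by rw [hwdef]; ring
    rw [this]
    field_simp
    rw [← hγ]
    ring
  have h2 : ((-ζ - 2 * I * ((‖γ‖ ^ 2 : ℝ) : ℂ)) / (ζ + I * ((‖γ‖ ^ 2 : ℝ) : ℂ)) ^ 2).im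
      = (ζ.im * (ζ.re ^ 2 + ζ.im ^ 2) + 4 * ζ.im ^ 2 * ‖γ‖ ^ 2
          + 5 * ζ.im * ‖γ‖ ^ 4 + 2 * ‖γ‖ ^ 6)
        / ‖ζ + I * ((‖γ‖ ^ 2 : ℝ) : ℂ)‖ ^ 4 := by
    have habs : ‖w‖ ^ 4 = Complex.normSq w ^ 2 := by
      rw [show (4:ℕ) = 2*2 from rfl, pow_mul, Complex.sq_norm]
    rw [habs]
    have hns : Complex.normSq w ≠ 0 := (Complex.normSq_pos.mpr hw).ne'
    have hwre : w.re = ζ.re := by simp [hwdef]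
    rw [Complex.div_im]
    rw [map_pow]
    have h2re : (w^2).re = w.re^2 - w.im^2 := by simp [sq, Complex.mul_re]
    have h2im : (w^2).im = 2 * w.re * w.im := by simp [sq, Complex.mul_im]; ring
    have hnre : (-ζ - 2 * I * (a:ℂ)).re = -ζ.re := by simp
    have hnim : (-ζ - 2 * I * (a:ℂ)).im = -(ζ.im + 2*a) := by simp; ring
    have ha4 : ‖γ‖ ^ 4 = a^2 := by rw [ha]; ring
    have ha6 : ‖γ‖ ^ 6 = a^3 := by rw [ha]; ring
    rw [ha4, ha6, h2re, h2im, hnre, hnim, hwre, hwim, Complex.normSq_apply, hwre, hwim]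
    field_simp
    ring
  refine ⟨h1, h2, ?_⟩
  rw [h2]
  apply div_pos
  · have ha4 : ‖γ‖ ^ 4 = a^2 := by rw [ha]; ring
    have ha6 : ‖γ‖ ^ 6 = a^3 := by rw [ha]; ring
    rw [ha4, ha6, ← ha]
    nlinarith [sq_nonneg ζ.re, sq_nonneg ζ.im, mul_pos hζ hζ, sq_nonneg a]
  · exact pow_pos (norm_pos_iff.mpr hw) 4
end
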